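/- Let p be an odd prime and a(j) as above. Then the sequence (1/(n·log_p(n))) · ∑_{j=1}^{n} (-1)^j a(j) converges to -1/2 as n → ∞. -/

import Mathlib

open Filter Real

/-- The order of `π_j L_{K(1)} S⁰` for `j ≥ 1` (at the odd prime `p`):
`p^(k+1)` if `j = 2(p-1)p^k r - 1` with `p ∤ r`, and `1` otherwise. -/
def K1SphereOrder (p j : ℕ) : ℕ :=
  if 2 * (p - 1) ∣ (j + 1) then p ^ (padicValNat p ((j + 1) / (2 * (p - 1))) + 1) else 1

private lemma eps_eq (n : ℕ) : ∑ j ∈ Finset.Icc 1 n, (-1:ℝ)^j = if Even n then 0 else -1 := by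
  induction n with
  | zero => simp
  | succ n ih =>
    rw [Finset.sum_Icc_succ_top (by omega), ih]
    rcases Nat.even_or_odd n with h | h
    · have h1 : Odd (n+1) := Even.add_one h
      rw [if_pos h, if_neg (Nat.not_even_iff_odd.2 h1), h1.neg_one_pow]
      ring
    · have h1 : ¬ Even n := Nat.not_even_iff_odd.mpr h
      have h2 : Even (n+1) := Nat.even_add_one.mpr h1
      rw [if_neg h1, if_pos h2, h2.neg_one_pow]
      ring

private lemma reindex (d : ℕ) (hd : 2 ≤ d) (h : ℕ → ℝ) (n : ℕ) :
    ∑ j ∈ Finset.Icc 1 n, (if d ∣ (j+1) then h ((j+1)/d) else 0)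
      = ∑ m ∈ Finset.Icc 1 ((n+1)/d), h m := by
  induction n with
  | zero =>
    rw [Nat.div_eq_of_lt (by omega)]
    simp
  | succ n ih =>
    rw [Finset.sum_Icc_succ_top (by omega), ih]
    have hs : (n+1+1)/d = (n+1)/d + if d ∣ (n+1+1) then 1 else 0 := Nat.succ_div
    by_cases hdvd : d ∣ (n+1+1)
    · have hs2 : (n+1+1)/d = (n+1)/d + 1 := by rw [hs, if_pos hdvd]
      rw [if_pos hdvd, hs2, Finset.sum_Icc_succ_top (Nat.succ_le_succ (Nat.zero_le _))]
    · rw [if_neg hdvd, add_zero, hs, if_neg hdvd, add_zero]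

private lemma pointwise (p : ℕ) (hp : p.Prime) (j : ℕ) :
    (-1:ℝ)^j * (K1SphereOrder p j : ℝ)
      = (-1:ℝ)^j + (if 2*(p-1) ∣ (j+1) then
          -((p:ℝ)^(padicValNat p ((j+1)/(2*(p-1))) + 1) - 1) else 0) := by
  unfold K1SphereOrder
  by_cases hd : 2*(p-1) ∣ (j+1)
  · have h2 : 2 ∣ j + 1 := dvd_trans ⟨p-1, rfl⟩ hd
    have hj : Odd j := by
      rcases h2 with ⟨c, hc⟩
      exact Nat.odd_iff.mpr (by omega)
    rw [if_pos hd, if_pos hd, hj.neg_one_pow]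
    push_cast
    ring
  · simp [hd]

private noncomputable def ccc (p k : ℕ) : ℝ := if k = 0 then 1 else ((p:ℝ)-1) * (p:ℝ)^(k-1)

private lemma sum_ccc (p v : ℕ) : ∑ k ∈ Finset.range (v+1), ccc p k = (p:ℝ)^v := by
  induction v with
  | zero => simp [ccc]
  | succ v ih =>
    rw [Finset.sum_range_succ, ih, ccc]
    simp only [Nat.succ_ne_zero, if_false, Nat.add_sub_cancel]
    ring

private lemma pow_val (p : ℕ) (hp : p.Prime) (K m : ℕ) (hm : m ≠ 0) (hv : padicValNat p m ≤ K) :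
    (p:ℝ)^(padicValNat p m) = ∑ k ∈ Finset.range (K+1), (if p^k ∣ m then ccc p k else 0) := by
  haveI : Fact p.Prime := ⟨hp⟩
  set v := padicValNat p m with hvdef
  have h1 : ∀ k, (p^k ∣ m) ↔ k ≤ v := fun k => padicValNat_dvd_iff_le hm
  have h2 : ∀ k ∈ Finset.range (K+1), (if p^k ∣ m then ccc p k else 0)
      = (if k ≤ v then ccc p k else 0) := by
    intro k _
    simp only [h1 k]
  rw [Finset.sum_congr rfl h2]
  rw [← Finset.sum_subset (Finset.range_subset_range.mpr (by omega : v+1 ≤ K+1))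
      (fun x _ hx => if_neg (by simp at hx; omega))]
  rw [Finset.sum_congr rfl (fun k hk => if_pos (by simp at hk; omega)), sum_ccc]

private lemma T_eq (p : ℕ) (hp : p.Prime) (M : ℕ) :
    ∑ m ∈ Finset.Icc 1 M, (p:ℝ)^(padicValNat p m)
      = ∑ k ∈ Finset.range (Nat.log p M + 1), ccc p k * ((M / p^k : ℕ) : ℝ) := by
  have hrw : ∀ m ∈ Finset.Icc 1 M, (p:ℝ)^(padicValNat p m)
      = ∑ k ∈ Finset.range (Nat.log p M + 1), (if p^k ∣ m then ccc p k else 0) := by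
    intro m hm
    simp only [Finset.mem_Icc] at hm
    apply pow_val p hp _ m (by omega)
    have h1 : p ^ padicValNat p m ∣ m := pow_padicValNat_dvd
    have h2 : p ^ padicValNat p m ≤ M := le_trans (Nat.le_of_dvd (by omega) h1) hm.2
    exact (Nat.le_log_iff_pow_le hp.one_lt (by omega)).2 h2
  rw [Finset.sum_congr rfl hrw, Finset.sum_comm]
  refine Finset.sum_congr rfl fun k _ => ?_
  rw [← Finset.sum_filter]
  rw [Finset.sum_const]
  have hicc : Finset.Icc 1 M = Finset.Ioc 0 M := by ext x; simp; omega
  rw [hicc, Nat.Ioc_filter_dvd_card_eq_div]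
  rw [nsmul_eq_mul, mul_comm]

private lemma T_bounds (p : ℕ) (hp : p.Prime) (M : ℕ) (hM : 1 ≤ M) :
    |(∑ m ∈ Finset.Icc 1 M, (p:ℝ)^(padicValNat p m))
      - ((M:ℝ) + (Nat.log p M : ℝ) * (((p:ℝ)-1)/p) * M)| ≤ M := by
  have hp0 : (0:ℝ) < p := by exact_mod_cast hp.pos
  have hp1 : (1:ℝ) < p := by exact_mod_cast hp.one_lt
  rw [T_eq p hp M]
  set K := Nat.log p M with hK
  rw [Finset.sum_range_succ']
  have h0 : ccc p 0 * ((M / p^0 : ℕ) : ℝ) = (M:ℝ) := by simp [ccc]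
  rw [h0]
  have hterm : ∀ i, ccc p (i+1) * ((M / p^(i+1) : ℕ) : ℝ)
      = ((p:ℝ)-1) * (p:ℝ)^i * ((M / p^(i+1) : ℕ) : ℝ) := by
    intro i; simp [ccc]
  -- upper bound per term
  have hub : ∀ i ∈ Finset.range K, ccc p (i+1) * ((M / p^(i+1) : ℕ) : ℝ)
      ≤ ((p:ℝ)-1)/p * M := by
    intro i _
    rw [hterm i]
    have h1 : ((M / p^(i+1) : ℕ) : ℝ) ≤ (M:ℝ) / ((p:ℝ)^(i+1)) := by
      have := Nat.cast_div_le (α := ℝ) (m := M) (n := p^(i+1))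
      simpa using this
    have h2 : ((p:ℝ)-1) * (p:ℝ)^i * ((M:ℝ) / ((p:ℝ)^(i+1))) = ((p:ℝ)-1)/p * M := by
      field_simp
      ring
    calc ((p:ℝ)-1) * (p:ℝ)^i * ((M / p^(i+1) : ℕ) : ℝ)
        ≤ ((p:ℝ)-1) * (p:ℝ)^i * ((M:ℝ) / ((p:ℝ)^(i+1))) := by
          exact mul_le_mul_of_nonneg_left h1
            (mul_nonneg (by linarith) (le_of_lt (pow_pos hp0 i)))
      _ = ((p:ℝ)-1)/p * M := h2
  -- lower bound per term
  have hlb : ∀ i ∈ Finset.range K, ((p:ℝ)-1)/p * M - ((p:ℝ)-1) * (p:ℝ)^i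
      ≤ ccc p (i+1) * ((M / p^(i+1) : ℕ) : ℝ) := by
    intro i _
    rw [hterm i]
    have hq : (0:ℕ) < p^(i+1) := pow_pos hp.pos _
    have h1 : (M:ℝ) < ((p:ℝ)^(i+1)) * ((M / p^(i+1) : ℕ) : ℝ) + (p:ℝ)^(i+1) := by
      have hd := Nat.div_add_mod M (p^(i+1))
      have hm2 := Nat.mod_lt M hq
      have h : M < p^(i+1) * (M / p^(i+1)) + p^(i+1) := by omega
      have : (M:ℝ) < ((p^(i+1) * (M / p^(i+1)) + p^(i+1) : ℕ) : ℝ) := by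
        exact_mod_cast Nat.cast_lt.mpr h
      push_cast at this
      push_cast
      nlinarith
    have hppos : (0:ℝ) < (p:ℝ)^(i+1) := by positivity
    have h2 : (M:ℝ) / ((p:ℝ)^(i+1)) - 1 < ((M / p^(i+1) : ℕ) : ℝ) := by
      rw [div_sub_one (ne_of_gt hppos), div_lt_iff₀ hppos]
      nlinarith
    have h3 : ((p:ℝ)-1) * (p:ℝ)^i * ((M:ℝ) / ((p:ℝ)^(i+1)) - 1)
        ≤ ((p:ℝ)-1) * (p:ℝ)^i * ((M / p^(i+1) : ℕ) : ℝ) :=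
      mul_le_mul_of_nonneg_left (le_of_lt h2)
        (mul_nonneg (by linarith) (le_of_lt (pow_pos hp0 i)))
    have h4 : ((p:ℝ)-1) * (p:ℝ)^i * ((M:ℝ) / ((p:ℝ)^(i+1)) - 1)
        = ((p:ℝ)-1)/p * M - ((p:ℝ)-1) * (p:ℝ)^i := by
      field_simp
      ring
    linarith
  have hsum_ub : ∑ i ∈ Finset.range K, ccc p (i+1) * ((M / p^(i+1) : ℕ) : ℝ)
      ≤ (K:ℝ) * (((p:ℝ)-1)/p * M) := by
    calc ∑ i ∈ Finset.range K, ccc p (i+1) * ((M / p^(i+1) : ℕ) : ℝ)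
        ≤ ∑ _i ∈ Finset.range K, ((p:ℝ)-1)/p * M := Finset.sum_le_sum hub
      _ = (K:ℝ) * (((p:ℝ)-1)/p * M) := by
          rw [Finset.sum_const, Finset.card_range, nsmul_eq_mul]
  have hgeom : ∑ i ∈ Finset.range K, ((p:ℝ)-1) * (p:ℝ)^i = (p:ℝ)^K - 1 := by
    rw [← Finset.mul_sum]
    have := geom_sum_mul (x := (p:ℝ)) K
    nlinarith [this]
  have hpK : ((p:ℝ)^K : ℝ) ≤ M := by
    have := Nat.pow_log_le_self p (show M ≠ 0 by omega)
    exact_mod_cast this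
  have hsum_lb : (K:ℝ) * (((p:ℝ)-1)/p * M) - (M:ℝ)
      ≤ ∑ i ∈ Finset.range K, ccc p (i+1) * ((M / p^(i+1) : ℕ) : ℝ) := by
    have := Finset.sum_le_sum hlb
    rw [Finset.sum_sub_distrib, Finset.sum_const, Finset.card_range, nsmul_eq_mul, hgeom] at this
    linarith
  rw [abs_le]
  constructor <;> nlinarith [hsum_ub, hsum_lb]

private lemma sum_formula (p : ℕ) (hp : p.Prime) (n : ℕ) :
    ∑ j ∈ Finset.Icc 1 n, (-1:ℝ)^j * (K1SphereOrder p j : ℝ)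
      = (∑ j ∈ Finset.Icc 1 n, (-1:ℝ)^j)
        + (((((n+1)/(2*(p-1)) : ℕ)) : ℝ)
          - p * ∑ m ∈ Finset.Icc 1 ((n+1)/(2*(p-1))), (p:ℝ)^(padicValNat p m)) := by
  have hd2 : 2 ≤ 2*(p-1) := by have := hp.two_le; omega
  rw [Finset.sum_congr rfl (fun j _ => pointwise p hp j), Finset.sum_add_distrib]
  congr 1
  rw [reindex (2*(p-1)) hd2 (fun m => -((p:ℝ)^(padicValNat p m + 1) - 1)) n]
  have : ∀ m ∈ Finset.Icc 1 ((n+1)/(2*(p-1))),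
      -((p:ℝ)^(padicValNat p m + 1) - 1) = 1 - (p:ℝ) * (p:ℝ)^(padicValNat p m) := by
    intro m _
    rw [pow_succ]
    ring
  rw [Finset.sum_congr rfl this, Finset.sum_sub_distrib, Finset.sum_const, ← Finset.mul_sum,
    Nat.card_Icc]
  simp

private lemma key_bound (p : ℕ) (hp : p.Prime) (n : ℕ)
    (hM : 1 ≤ (n+1)/(2*(p-1))) :
    |(∑ j ∈ Finset.Icc 1 n, (-1:ℝ)^j * (K1SphereOrder p j : ℝ))
      + ((p:ℝ)-1) * (Nat.log p ((n+1)/(2*(p-1))) : ℝ) * ((((n+1)/(2*(p-1)) : ℕ)) : ℝ)|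
      ≤ 1 + 2*(p:ℝ) * ((((n+1)/(2*(p-1)) : ℕ)) : ℝ) := by
  have hp0 : (0:ℝ) < p := by exact_mod_cast hp.pos
  have hp1 : (1:ℝ) < p := by exact_mod_cast hp.one_lt
  set M := (n+1)/(2*(p-1)) with hMdef
  set K := Nat.log p M with hKdef
  set T := ∑ m ∈ Finset.Icc 1 M, (p:ℝ)^(padicValNat p m) with hT
  set E := ∑ j ∈ Finset.Icc 1 n, (-1:ℝ)^j with hE
  have heps : |E| ≤ 1 := by
    rw [hE, eps_eq]
    split <;> norm_num
  have hTb : |T - ((M:ℝ) + (K:ℝ) * (((p:ℝ)-1)/p) * M)| ≤ (M:ℝ) := T_bounds p hp M hM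
  have hS : ∑ j ∈ Finset.Icc 1 n, (-1:ℝ)^j * (K1SphereOrder p j : ℝ)
      = E + ((M:ℝ) - p * T) := sum_formula p hp n
  rw [hS]
  rw [abs_le] at heps hTb ⊢
  have hKnn : (0:ℝ) ≤ (K:ℝ) := Nat.cast_nonneg K
  have hMnn : (0:ℝ) ≤ (M:ℝ) := Nat.cast_nonneg M
  have hexp : (p:ℝ) * ((K:ℝ) * (((p:ℝ)-1)/p) * M) = ((p:ℝ)-1) * (K:ℝ) * (M:ℝ) := by
    rw [div_eq_mul_inv,
      show (p:ℝ) * ((K:ℝ) * (((p:ℝ)-1) * (p:ℝ)⁻¹) * M)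
        = ((p:ℝ)*(p:ℝ)⁻¹) * (((p:ℝ)-1) * (K:ℝ) * M) from by ring,
      mul_inv_cancel₀ (ne_of_gt hp0), one_mul]
  constructor <;> nlinarith [hTb.1, hTb.2, heps.1, heps.2]

private lemma aux_lim (c : ℝ) : Tendsto (fun n : ℕ => ((n:ℝ)+c)/n) atTop (nhds 1) := by
  have h : Tendsto (fun n : ℕ => 1 + c/n) atTop (nhds (1+0)) :=
    tendsto_const_nhds.add (tendsto_const_div_atTop_nhds_zero_nat c)
  rw [add_zero] at h
  refine h.congr' ?_
  filter_upwards [eventually_ge_atTop 1] with n hn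
  have hn0 : (n:ℝ) ≠ 0 := by
    have : (1:ℝ) ≤ n := by exact_mod_cast hn
    linarith
  field_simp

private lemma Mlim (d : ℕ) (hd : 2 ≤ d) :
    Tendsto (fun n : ℕ => (d:ℝ) * (((n+1)/d : ℕ) : ℝ) / n) atTop (nhds 1) := by
  refine tendsto_of_tendsto_of_tendsto_of_le_of_le' (aux_lim (1-(d:ℝ))) (aux_lim 1) ?_ ?_
  · filter_upwards [eventually_ge_atTop 1] with n hn
    have hd0 : 0 < d := by omega
    have h3 : n + 1 < d * ((n+1)/d) + d := by
      have h1 := Nat.div_add_mod (n+1) d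
      have h2 := Nat.mod_lt (n+1) hd0
      omega
    have h3R : (n:ℝ) + 1 < (d:ℝ) * (((n+1)/d : ℕ) : ℝ) + d := by exact_mod_cast h3
    have hn0 : (0:ℝ) ≤ n := Nat.cast_nonneg n
    gcongr
    linarith
  · filter_upwards [eventually_ge_atTop 1] with n hn
    have h3 : d * ((n+1)/d) ≤ n + 1 := Nat.mul_div_le _ _
    have h3R : (d:ℝ) * (((n+1)/d : ℕ) : ℝ) ≤ (n:ℝ) + 1 := by exact_mod_cast h3
    have hn0 : (0:ℝ) ≤ n := Nat.cast_nonneg n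
    gcongr

private lemma Klim (p d : ℕ) (hp : 2 ≤ p) (hd : 4 ≤ d) :
    Tendsto (fun n : ℕ => ((Nat.log p ((n+1)/d) : ℕ) : ℝ) / Real.logb p n) atTop (nhds 1) := by
  have hp1R : (1:ℝ) < p := by exact_mod_cast hp
  have hLtop : Tendsto (fun n : ℕ => Real.logb p n) atTop atTop :=
    (Real.tendsto_logb_atTop hp1R).comp tendsto_natCast_atTop_atTop
  set c : ℝ := Real.logb p (2*(d:ℝ)) + 1 with hc
  have hlow : Tendsto (fun n : ℕ => 1 - c / Real.logb p n) atTop (nhds (1 - 0)) :=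
    tendsto_const_nhds.sub (tendsto_const_nhds.div_atTop hLtop)
  rw [sub_zero] at hlow
  refine tendsto_of_tendsto_of_tendsto_of_le_of_le' hlow tendsto_const_nhds ?_ ?_
  · -- lower bound : 1 - c/L ≤ K/L
    filter_upwards [eventually_ge_atTop (2*d)] with n hn
    set M : ℕ := (n+1)/d with hM
    set K : ℕ := Nat.log p M with hK
    have hn2 : 2 ≤ n := by omega
    have hnR : (2:ℝ) ≤ n := by exact_mod_cast hn2
    have hL0 : 0 < Real.logb p n := Real.logb_pos hp1R (by linarith)
    have hd0 : 0 < d := by omega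
    have h3 : n + 1 < d * M + d := by
      have h1 := Nat.div_add_mod (n+1) d
      have h2 := Nat.mod_lt (n+1) hd0
      rw [← hM] at h1
      omega
    have h3R : (n:ℝ) + 1 < (d:ℝ) * M + d := by exact_mod_cast h3
    have hdR : (4:ℝ) ≤ d := by exact_mod_cast hd
    have hnd : (2*(d:ℝ)) ≤ n := by exact_mod_cast hn
    have hMgt : (n:ℝ) / (2*d) < (M:ℝ) := by
      rw [div_lt_iff₀ (by linarith)]
      nlinarith
    have h4 : M < p ^ (K+1) := Nat.lt_pow_succ_log_self (by omega) M
    have h4R : (M:ℝ) < (p:ℝ) ^ (K+1) := by exact_mod_cast h4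
    have h5 : (n:ℝ) / (2*d) < (p:ℝ)^(K+1) := lt_trans hMgt h4R
    have hpos : (0:ℝ) < (n:ℝ) / (2*d) := by
      apply div_pos (by linarith) (by linarith)
    have h6 : Real.logb p ((n:ℝ)/(2*d)) ≤ Real.logb p ((p:ℝ)^(K+1)) :=
      Real.logb_le_logb_of_le hp1R hpos (le_of_lt h5)
    rw [Real.logb_pow, Real.logb_self_eq_one hp1R,
      Real.logb_div (by linarith) (by linarith)] at h6
    have h7 : Real.logb p n - c ≤ (K:ℝ) := by
      rw [hc]
      push_cast at h6 ⊢
      linarith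
    have heq : 1 - c / Real.logb p n = (Real.logb p n - c) / Real.logb p n := by
      rw [sub_div, div_self (ne_of_gt hL0)]
    rw [heq]
    exact (div_le_div_iff_of_pos_right hL0).mpr h7
  · -- upper bound : K/L ≤ 1
    filter_upwards [eventually_ge_atTop (2*d)] with n hn
    set M : ℕ := (n+1)/d with hM
    set K : ℕ := Nat.log p M with hK
    have hn2 : 2 ≤ n := by omega
    have hnR : (2:ℝ) ≤ n := by exact_mod_cast hn2
    have hL0 : 0 < Real.logb p n := Real.logb_pos hp1R (by linarith)
    have hM1 : 1 ≤ M := by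
      rw [hM]
      exact Nat.one_le_div_iff (by omega) |>.mpr (by omega)
    have hMn : M ≤ n := by
      have h1 : (n+1)/d ≤ (n+1)/4 := Nat.div_le_div_left hd (by norm_num)
      have h2 : (n+1)/4 ≤ n := by omega
      omega
    have hpK : p ^ K ≤ n := le_trans (Nat.pow_log_le_self p (by omega)) hMn
    have hpKR : (p:ℝ) ^ K ≤ (n:ℝ) := by exact_mod_cast hpK
    have h6 : Real.logb p ((p:ℝ)^K) ≤ Real.logb p n :=
      Real.logb_le_logb_of_le hp1R (by positivity) hpKR
    rw [Real.logb_pow, Real.logb_self_eq_one hp1R, mul_one] at h6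
    exact (div_le_one hL0).mpr h6

/-- `(1/(n·log_p n)) ∑_{j=1}^n (-1)^j |π_j L_{K(1)}S⁰| → -1/2` as `n → ∞`. -/
theorem statement5 (p : ℕ) (hp : p.Prime) (hodd : Odd p) :
    Tendsto (fun n : ℕ =>
      (∑ j ∈ Finset.Icc 1 n, (-1 : ℝ) ^ j * (K1SphereOrder p j : ℝ)) /
        (n * Real.logb p n)) atTop (nhds (-(1 / 2))) := by
  have hp2 := hp.two_le
  have hpne2 : p ≠ 2 := by
    rintro rfl
    simp [Nat.odd_iff] at hodd
  have hp3 : 3 ≤ p := by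
    rcases Nat.lt_or_ge p 3 with h | h
    · omega
    · exact h
  have hp1R : (1:ℝ) < p := by exact_mod_cast hp.one_lt
  have hd4 : 4 ≤ 2*(p-1) := by omega
  have hLtop : Tendsto (fun n : ℕ => Real.logb p n) atTop atTop :=
    (Real.tendsto_logb_atTop hp1R).comp tendsto_natCast_atTop_atTop
  have hdR : ((2*(p-1) : ℕ) : ℝ) = 2*((p:ℝ)-1) := by
    push_cast [Nat.cast_sub (by omega : 1 ≤ p)]
    ring
  -- the two pieces
  have hg2 : Tendsto (fun n : ℕ =>
      (((p:ℝ)-1) * (Nat.log p ((n+1)/(2*(p-1))) : ℝ) * ((((n+1)/(2*(p-1)) : ℕ)) : ℝ))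
        / ((n:ℝ) * Real.logb p n)) atTop (nhds (1/2)) := by
    have hq : Tendsto (fun n : ℕ => (1/2 : ℝ) *
        (((Nat.log p ((n+1)/(2*(p-1))) : ℕ) : ℝ) / Real.logb p n *
          (((2*(p-1) : ℕ):ℝ) * (((n+1)/(2*(p-1)) : ℕ) : ℝ) / n)))
        atTop (nhds ((1/2) * (1 * 1))) :=
      tendsto_const_nhds.mul ((Klim p (2*(p-1)) hp2 hd4).mul (Mlim (2*(p-1)) (by omega)))
    rw [show ((1:ℝ)/2) * (1*1) = 1/2 by norm_num] at hq
    refine hq.congr' ?_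
    filter_upwards [eventually_ge_atTop 2] with n hn
    have hnR : (2:ℝ) ≤ n := by exact_mod_cast hn
    have hn0 : (n:ℝ) ≠ 0 := by linarith
    have hL0 : Real.logb p n ≠ 0 := ne_of_gt (Real.logb_pos hp1R (by linarith))
    rw [hdR]
    field_simp
  have hg1 : Tendsto (fun n : ℕ =>
      ((∑ j ∈ Finset.Icc 1 n, (-1 : ℝ) ^ j * (K1SphereOrder p j : ℝ))
        + ((p:ℝ)-1) * (Nat.log p ((n+1)/(2*(p-1))) : ℝ) * ((((n+1)/(2*(p-1)) : ℕ)) : ℝ))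
        / ((n:ℝ) * Real.logb p n)) atTop (nhds 0) := by
    apply squeeze_zero_norm' (a := fun n : ℕ => (1 + 2*(p:ℝ)) / Real.logb p n)
    · filter_upwards [eventually_ge_atTop (2*(2*(p-1)))] with n hn
      have hn2 : 2 ≤ n := by omega
      have hnR : (2:ℝ) ≤ n := by exact_mod_cast hn2
      have hn0 : (0:ℝ) < n := by linarith
      have hL0 : 0 < Real.logb p n := Real.logb_pos hp1R (by linarith)
      have hM1 : 1 ≤ (n+1)/(2*(p-1)) := Nat.one_le_div_iff (by omega) |>.mpr (by omega)
      have hMn : (n+1)/(2*(p-1)) ≤ n := by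
        have h1 : (n+1)/(2*(p-1)) ≤ (n+1)/4 := Nat.div_le_div_left hd4 (by norm_num)
        omega
      have hMnR : ((((n+1)/(2*(p-1)) : ℕ)) : ℝ) ≤ (n:ℝ) := by exact_mod_cast hMn
      have hkey := key_bound p hp n hM1
      have hnum : |(∑ j ∈ Finset.Icc 1 n, (-1 : ℝ) ^ j * (K1SphereOrder p j : ℝ))
          + ((p:ℝ)-1) * (Nat.log p ((n+1)/(2*(p-1))) : ℝ) * ((((n+1)/(2*(p-1)) : ℕ)) : ℝ)|
          ≤ (1 + 2*(p:ℝ)) * n := by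
        calc _ ≤ 1 + 2*(p:ℝ) * ((((n+1)/(2*(p-1)) : ℕ)) : ℝ) := hkey
          _ ≤ (1 + 2*(p:ℝ)) * n := by nlinarith
      rw [Real.norm_eq_abs, abs_div, abs_of_pos (by positivity : (0:ℝ) < (n:ℝ) * Real.logb p n)]
      calc _ ≤ ((1 + 2*(p:ℝ)) * n) / ((n:ℝ) * Real.logb p n) := by
              apply div_le_div_of_nonneg_right hnum ?_ |>.trans_eq rfl
              positivity
        _ = (1 + 2*(p:ℝ)) / Real.logb p n := by
              rw [mul_comm (1 + 2*(p:ℝ)) (n:ℝ), mul_div_mul_left _ _ (ne_of_gt hn0)]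
    · exact tendsto_const_nhds.div_atTop hLtop
  have hsub := hg1.sub hg2
  rw [zero_sub] at hsub
  exact hsub.congr fun n => by rw [div_sub_div_same, add_sub_cancel_right]
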